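/- Let l ≥ 1 and r ≥ 1 be integers, let θ_1, …, θ_r be pairwise distinct irrational real numbers in the open interval (0,1), and let s_1, …, s_r ∈ ℤ. Put λ := (exp(π i θ_1), …, exp(π i θ_r)) ∈ T^r and let Γ ⊆ T^r be the topological closure of the set {λ^k : k ∈ ℤ, k ≥ 1}. Assume that for every integer k ≥ 1 the integer Σ_{i=1}^r s_i·(⌊(k+1)θ_i/2⌋ − ⌊kθ_i/2⌋) is divisible by l. Let η : [0,1] → Γ be a continuous path and let u_1, …, u_r : [0,1] → ℝ be continuous functions such that η(t)_i = exp(2π i · u_i(t)) for all t ∈ [0,1] and all i, and such that u_i(0) ∉ ℤ and u_i(1) ∉ ℤ for every i with s_i ≠ 0. Then l divides Σ_{i=1}^r s_i·(⌊u_i(1)⌋ − ⌊u_i(0)⌋). -/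

import Mathlib

open scoped Real
open Filter Topology

noncomputable def ee (x : ℝ) : Circle := Circle.exp (2 * π * x)

lemma ee_add (x y : ℝ) : ee (x + y) = ee x * ee y := by
  simp [ee, mul_add, Circle.exp_add]

lemma ee_int (m : ℤ) : ee m = 1 := Circle.exp_two_pi_mul_int m

lemma ee_cont : Continuous ee :=
  Circle.exp.continuous.comp (continuous_const.mul continuous_id)

lemma ee_neg (x : ℝ) : ee (-x) = (ee x)⁻¹ := by
  simp [ee, mul_neg]

lemma ee_fract (x : ℝ) : ee (Int.fract x) = ee x := by
  have : x = (⌊x⌋ : ℝ) + Int.fract x := (Int.floor_add_fract x).symm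
  nth_rewrite 2 [this]
  rw [ee_add, ee_int, one_mul]

lemma ee_eq_iff {x y : ℝ} : ee x = ee y ↔ ∃ m : ℤ, x = y + m := by
  rw [ee, ee, Circle.exp_eq_exp]
  constructor
  · rintro ⟨m, hm⟩
    refine ⟨m, ?_⟩
    have hπ : (2 * π) ≠ 0 := by positivity
    nlinarith [hm, Real.pi_pos]
  · rintro ⟨m, hm⟩
    exact ⟨m, by rw [hm]; ring⟩

lemma ee_pow (x : ℝ) (n : ℕ) : ee x ^ n = ee (n * x) := by
  induction n with
  | zero => simp [ee]
  | succ n ih => rw [pow_succ, ih, ← ee_add]; push_cast; ring_nf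

lemma ee_zpow (x : ℝ) (n : ℤ) : ee x ^ n = ee (n * x) := by
  cases n with
  | ofNat n => simpa using ee_pow x n
  | negSucc n =>
      rw [zpow_negSucc, ee_pow]
      rw [show ((Int.negSucc n : ℤ) : ℝ) * x = -(((n+1 : ℕ) : ℝ) * x) by
        push_cast [Int.negSucc_eq]; ring]
      rw [ee_neg]

lemma ee_prod {ι : Type*} [Fintype ι] (f : ι → ℝ) :
    ∏ i, ee (f i) = ee (∑ i, f i) := by
  classical
  induction (Finset.univ : Finset ι) using Finset.induction with
  | empty => simp [ee]
  | insert _ _ h ih => simp [Finset.prod_insert h, Finset.sum_insert h, ih, ee_add]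

lemma floor_jump_zero {x t : ℝ} (ht0 : 0 ≤ t) (h : Int.fract x + t < 1) :
    ⌊x + t⌋ = ⌊x⌋ := by
  have hx : x + t = (⌊x⌋ : ℝ) + (Int.fract x + t) := by
    rw [← add_assoc, Int.floor_add_fract]
  rw [hx, Int.floor_intCast_add]
  have : ⌊Int.fract x + t⌋ = 0 :=
    Int.floor_eq_zero_iff.2 ⟨by linarith [Int.fract_nonneg x], h⟩
  omega

lemma floor_jump_one {x t : ℝ} (ht1 : t < 1) (h : 1 ≤ Int.fract x + t) :
    ⌊x + t⌋ = ⌊x⌋ + 1 := by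
  have hx : x + t = (⌊x⌋ : ℝ) + (Int.fract x + t) := by
    rw [← add_assoc, Int.floor_add_fract]
  rw [hx, Int.floor_intCast_add]
  have : ⌊Int.fract x + t⌋ = 1 := by
    have h2 : Int.fract x + t < 2 := by
      have := Int.fract_lt_one x; linarith
    rw [Int.floor_eq_iff]
    push_cast
    exact ⟨h, by linarith⟩
  omega

lemma unique_fract {a y : ℝ} (ha : a ∈ Set.Icc (0:ℝ) 1) (hy : ∀ m : ℤ, y ≠ m)
    (h : ee a = ee y) : a = Int.fract y := by
  rw [← ee_fract y] at h
  obtain ⟨m, hm⟩ := ee_eq_iff.1 h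
  have h0 : 0 < Int.fract y := by
    rcases lt_or_eq_of_le (Int.fract_nonneg y) with h | h
    · exact h
    · exfalso
      apply hy ⌊y⌋
      have := Int.floor_add_fract y
      rw [← h] at this
      linarith
  have h1 : Int.fract y < 1 := Int.fract_lt_one y
  obtain ⟨ha0, ha1⟩ := ha
  have : m = 0 := by
    by_contra hm0
    rcases lt_or_gt_of_ne hm0 with h' | h'
    · have : (m : ℝ) ≤ -1 := by exact_mod_cast (by omega : m ≤ -1)
      linarith
    · have : (1 : ℝ) ≤ m := by exact_mod_cast h'
      linarith
  simp [this] at hm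
  exact hm

lemma fract_tendsto {x : ℕ → ℝ} {y : ℝ} (hy : ∀ m : ℤ, y ≠ m)
    (h : Tendsto (fun n => ee (x n)) atTop (𝓝 (ee y))) :
    Tendsto (fun n => Int.fract (x n)) atTop (𝓝 (Int.fract y)) := by
  apply tendsto_of_subseq_tendsto
  intro ns hns
  have hcomp : IsCompact (Set.Icc (0:ℝ) 1) := isCompact_Icc
  obtain ⟨a, ha, φ, hφ, hfa⟩ := hcomp.tendsto_subseq
    (x := fun n => Int.fract (x (ns n)))
    (fun n => ⟨Int.fract_nonneg _, (Int.fract_lt_one _).le⟩)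
  have h1 : Tendsto (fun n => ee (x (ns (φ n)))) atTop (𝓝 (ee y)) :=
    h.comp (hns.comp hφ.tendsto_atTop)
  have h2 : Tendsto (fun n => ee (Int.fract (x (ns (φ n))))) atTop (𝓝 (ee a)) :=
    (ee_cont.tendsto a).comp hfa
  have h3 : ee a = ee y := by
    apply tendsto_nhds_unique h2
    simpa only [ee_fract] using h1
  exact ⟨φ, (unique_fract ha hy h3) ▸ hfa⟩

/-- Divisibility of the intersection index of a path in `Γ` with the index cycle:
if `l` divides every index jump `Σᵢ sᵢ·(⌊(k+1)θᵢ/2⌋ − ⌊kθᵢ/2⌋)`, then for any continuous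
path `η` in `Γ` with continuous lifts `uᵢ` of its coordinates whose endpoints avoid ℤ
(for `sᵢ ≠ 0`), the intersection index `Σᵢ sᵢ·(⌊uᵢ(1)⌋ − ⌊uᵢ(0)⌋)` is divisible by `l`. -/
theorem intersection_index_divisible (l r : ℕ) (hl : 1 ≤ l) (hr : 1 ≤ r)
    (θ : Fin r → ℝ) (hirr : ∀ i, Irrational (θ i))
    (hmem : ∀ i, θ i ∈ Set.Ioo (0 : ℝ) 1) (hdist : Function.Injective θ)
    (s : Fin r → ℤ)
    (hdiv : ∀ k : ℕ, 1 ≤ k →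
      (l : ℤ) ∣ ∑ i, s i * (⌊((k : ℝ) + 1) * θ i / 2⌋ - ⌊(k : ℝ) * θ i / 2⌋))
    (Γ : Set (Fin r → Circle))
    (hΓ : Γ = closure {g : Fin r → Circle |
      ∃ k : ℕ, 1 ≤ k ∧ g = fun i => (Circle.exp (π * θ i)) ^ k})
    (η : Set.Icc (0 : ℝ) 1 → Fin r → Circle) (hη : Continuous η)
    (hηΓ : ∀ t, η t ∈ Γ)
    (u : Fin r → Set.Icc (0 : ℝ) 1 → ℝ) (hu : ∀ i, Continuous (u i))
    (hlift : ∀ t, ∀ i, η t i = Circle.exp (2 * π * u i t))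
    (h0 : ∀ i, s i ≠ 0 → ∀ m : ℤ, u i ⟨0, Set.left_mem_Icc.2 zero_le_one⟩ ≠ m)
    (h1 : ∀ i, s i ≠ 0 → ∀ m : ℤ, u i ⟨1, Set.right_mem_Icc.2 zero_le_one⟩ ≠ m) :
    (l : ℤ) ∣ ∑ i, s i *
      (⌊u i ⟨1, Set.right_mem_Icc.2 zero_le_one⟩⌋ -
       ⌊u i ⟨0, Set.left_mem_Icc.2 zero_le_one⟩⌋) := by
  classical
  have hlR : (l : ℝ) ≠ 0 := by positivity
  -- basic notation
  set lamPow : ℕ → (Fin r → Circle) := fun k => fun i => Circle.exp (π * θ i) ^ k with hlamPow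
  have hlam : ∀ (k : ℕ) (i : Fin r), lamPow k i = ee ((k : ℝ) * θ i / 2) := by
    intro k i
    have h1 : Circle.exp (π * θ i) = ee (θ i / 2) := by
      rw [ee]; congr 1; ring
    rw [hlamPow]; dsimp only; rw [h1, ee_pow]; congr 1; ring
  set β : ℝ := (∑ i, (s i : ℝ) * θ i) / 2 with hβ
  set eC : ℕ → Circle := fun k => ee ((k : ℝ) * β / l) with heC
  set gen : Set ((Fin r → Circle) × Circle) :=
    {x | ∃ k : ℕ, 1 ≤ k ∧ x = (lamPow k, eC k)} with hgen
  set Ghat : Set ((Fin r → Circle) × Circle) := closure gen with hGhat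
  -- step 1 : l divides the partial floors
  have hA : ∀ k : ℕ, 1 ≤ k → (l : ℤ) ∣ ∑ i, s i * ⌊(k : ℝ) * θ i / 2⌋ := by
    intro k hk
    induction k with
    | zero => omega
    | succ k ih =>
      rcases Nat.lt_or_ge k 1 with h1 | h2
      · interval_cases k
        have hz : ∀ i : Fin r, ⌊((0+1 : ℕ) : ℝ) * θ i / 2⌋ = 0 := by
          intro i
          obtain ⟨hθ0, hθ1⟩ := hmem i
          rw [Int.floor_eq_zero_iff]
          constructor
          · push_cast; linarith
          · push_cast; linarith
        simp only [hz, mul_zero, Finset.sum_const_zero]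
        exact dvd_zero _
      · have hsplit : ∑ i, s i * ⌊((k : ℝ) + 1) * θ i / 2⌋
            = (∑ i, s i * ⌊(k : ℝ) * θ i / 2⌋)
              + ∑ i, s i * (⌊((k : ℝ) + 1) * θ i / 2⌋ - ⌊(k : ℝ) * θ i / 2⌋) := by
          rw [← Finset.sum_add_distrib]
          apply Finset.sum_congr rfl
          intros; ring
        have hcast : (((k + 1 : ℕ)) : ℝ) = (k : ℝ) + 1 := by push_cast; ring
        rw [show ∑ i, s i * ⌊((k+1 : ℕ) : ℝ) * θ i / 2⌋
              = ∑ i, s i * ⌊((k : ℝ) + 1) * θ i / 2⌋ by rw [hcast]]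
        rw [hsplit]
        exact dvd_add (ih h2) (hdiv k h2)
  -- pointwise rewriting of eC through fractional parts
  have hkβ : ∀ k : ℕ, 1 ≤ k →
      eC k = ee ((∑ i, (s i : ℝ) * Int.fract ((k : ℝ) * θ i / 2)) / l) := by
    intro k hk
    obtain ⟨B, hB⟩ := hA k hk
    have h1 : (k : ℝ) * β = ∑ i, (s i : ℝ) * ((k : ℝ) * θ i / 2) := by
      rw [hβ, div_eq_mul_inv, Finset.sum_mul, Finset.mul_sum]
      apply Finset.sum_congr rfl
      intros; ring
    have h2 : (k : ℝ) * β
        = (∑ i, (s i : ℝ) * Int.fract ((k : ℝ) * θ i / 2)) + (l : ℝ) * B := by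
      have h3 : ((∑ i, s i * ⌊(k : ℝ) * θ i / 2⌋ : ℤ) : ℝ) = (l : ℝ) * B := by
        rw [hB]; push_cast; ring
      rw [h1]
      push_cast at h3
      rw [← h3, ← Finset.sum_add_distrib]
      apply Finset.sum_congr rfl
      intro i _
      rw [← mul_add, Int.fract_add_floor]
    rw [heC]
    dsimp only
    rw [h2, add_div, ee_add, mul_comm (l:ℝ) (B:ℝ), mul_div_assoc,
      div_self hlR, mul_one, ee_int, mul_one]
  -- kernel lemma
  have hK1 : ∀ k : ℕ → ℕ, (∀ n, 1 ≤ k n) →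
      Tendsto (fun n => lamPow (k n)) atTop (𝓝 1) →
      Tendsto (fun n => eC (k n)) atTop (𝓝 1) := by
    intro k hk1 hklim
    apply tendsto_of_subseq_tendsto
    intro ns hns
    have hcomp : IsCompact (Set.pi Set.univ fun _ : Fin r => Set.Icc (0:ℝ) 1) :=
      isCompact_univ_pi fun _ => isCompact_Icc
    obtain ⟨c, hc, φ, hφ, hfc⟩ := hcomp.tendsto_subseq
      (x := fun n => fun i => Int.fract ((k (ns n) : ℝ) * θ i / 2))
      (fun n => fun i _ => ⟨Int.fract_nonneg _, (Int.fract_lt_one _).le⟩)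
    refine ⟨φ, ?_⟩
    set m : ℕ → ℕ := fun n => k (ns (φ n)) with hm
    have hm1 : ∀ n, 1 ≤ m n := fun n => hk1 _
    have hmlim : Tendsto (fun n => lamPow (m n)) atTop (𝓝 1) :=
      hklim.comp (hns.comp hφ.tendsto_atTop)
    have hfci : ∀ i, Tendsto (fun n => Int.fract ((m n : ℝ) * θ i / 2)) atTop (𝓝 (c i)) :=
      fun i => (tendsto_pi_nhds.1 hfc) i
    have hci : ∀ i, c i = 0 ∨ c i = 1 := by
      intro i
      have hA1 : Tendsto (fun n => ee (Int.fract ((m n : ℝ) * θ i / 2))) atTop (𝓝 (ee (c i))) :=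
        (ee_cont.tendsto _).comp (hfci i)
      have hA2 : (fun n => ee (Int.fract ((m n : ℝ) * θ i / 2)))
          = fun n => lamPow (m n) i := by
        funext n; rw [ee_fract, ← hlam]
      have hA3 : Tendsto (fun n => lamPow (m n) i) atTop (𝓝 1) :=
        (tendsto_pi_nhds.1 hmlim) i
      rw [hA2] at hA1
      have hA4 : ee (c i) = 1 := tendsto_nhds_unique hA1 hA3
      have hA5 : ee (c i) = ee (0 : ℝ) := by
        rw [hA4]; symm
        simpa using ee_int 0
      obtain ⟨mm, hmm⟩ := ee_eq_iff.1 hA5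
      have hcb := hc i (Set.mem_univ i)
      obtain ⟨hc0, hc1⟩ := hcb
      rw [zero_add] at hmm
      have : mm = 0 ∨ mm = 1 := by
        by_contra hcon
        push_neg at hcon
        obtain ⟨u1, u2⟩ := hcon
        rcases lt_or_gt_of_ne u1 with h' | h'
        · have : (mm : ℝ) ≤ -1 := by exact_mod_cast (by omega : mm ≤ -1)
          rw [hmm] at hc0; linarith
        · have : (2 : ℝ) ≤ mm := by exact_mod_cast (by omega : (2:ℤ) ≤ mm)
          rw [hmm] at hc1; linarith
      rcases this with h' | h'
      · left; rw [hmm, h']; norm_num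
      · right; rw [hmm, h']; norm_num
    have hev : ∀ᶠ n in atTop, ∀ i,
        (⌊((m n : ℝ) + 1) * θ i / 2⌋ - ⌊(m n : ℝ) * θ i / 2⌋ : ℤ)
          = (if c i = 1 then 1 else 0) := by
      rw [eventually_all]
      intro i
      obtain ⟨hθ0, hθ1⟩ := hmem i
      have hid : ∀ n : ℕ, ((m n : ℝ) + 1) * θ i / 2 = (m n : ℝ) * θ i / 2 + θ i / 2 := by
        intro n; ring
      rcases hci i with hc0 | hc1
      · have hev1 : ∀ᶠ n in atTop, Int.fract ((m n : ℝ) * θ i / 2) < 1 - θ i / 2 := by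
          apply (hfci i).eventually_lt_const
          rw [hc0]; linarith
        filter_upwards [hev1] with n hn
        rw [if_neg (by rw [hc0]; norm_num), hid n,
          floor_jump_zero (by linarith) (by linarith)]
        ring
      · have hev1 : ∀ᶠ n in atTop, 1 - θ i / 2 < Int.fract ((m n : ℝ) * θ i / 2) := by
          apply (hfci i).eventually_const_lt
          rw [hc1]; linarith
        filter_upwards [hev1] with n hn
        rw [if_pos hc1, hid n, floor_jump_one (by linarith) (by linarith)]
        ring
    set SJ : ℤ := ∑ i, s i * (if c i = 1 then 1 else 0) with hSJdef
    have hSJ : (l : ℤ) ∣ SJ := by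
      obtain ⟨n0, hn0⟩ := hev.exists
      have hd := hdiv (m n0) (hm1 n0)
      have : ∑ i, s i * (⌊((m n0 : ℝ) + 1) * θ i / 2⌋ - ⌊(m n0 : ℝ) * θ i / 2⌋) = SJ := by
        apply Finset.sum_congr rfl
        intro i _
        rw [hn0 i]
      rwa [this] at hd
    obtain ⟨B, hB⟩ := hSJ
    have hgoalval : (∑ i, (s i : ℝ) * c i) / l = (B : ℤ) := by
      have h1 : (∑ i, (s i : ℝ) * c i) = (SJ : ℝ) := by
        rw [hSJdef, Int.cast_sum]
        apply Finset.sum_congr rfl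
        intro i _
        rcases hci i with h' | h'
        · simp [h']
        · simp [h']
      rw [h1, hB]
      push_cast
      rw [mul_comm, mul_div_assoc, div_self hlR, mul_one]
    have hσ : Tendsto (fun n => (∑ i, (s i : ℝ) * Int.fract ((m n : ℝ) * θ i / 2)) / l)
        atTop (𝓝 ((∑ i, (s i : ℝ) * c i) / l)) := by
      apply Tendsto.div_const
      exact tendsto_finset_sum _ (fun i _ => (hfci i).const_mul _)
    have hfinal : Tendsto (fun n => eC (m n)) atTop (𝓝 (ee ((∑ i, (s i : ℝ) * c i) / l))) := by
      have := (ee_cont.tendsto _).comp hσ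
      exact this.congr fun n => (hkβ (m n) (hm1 n)).symm
    have : ee ((∑ i, (s i : ℝ) * c i) / l) = 1 := by
      rw [hgoalval]
      exact ee_int B
    rwa [this] at hfinal
  -- recurrence of powers of λ near 1
  have hadd : ∀ p q : ℕ, lamPow (p + q) = lamPow p * lamPow q := by
    intro p q
    funext i
    simp [hlamPow, pow_add]
  have hecadd : ∀ p q : ℕ, eC (p + q) = eC p * eC q := by
    intro p q
    rw [heC]
    dsimp only
    rw [← ee_add]
    congr 1
    push_cast
    ring
  have hrec : ∀ M : ℕ, ∀ ε > (0:ℝ), ∃ q : ℕ, M ≤ q ∧ dist (lamPow q) 1 < ε := by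
    intro M ε hε
    obtain ⟨z, _, φ, hφ, hz⟩ := (isCompact_univ (X := Fin r → Circle)).tendsto_subseq
      (x := fun n => lamPow ((M+1) * (n+1))) (fun n => Set.mem_univ _)
    set Q : ℕ → ℕ := fun n => (M+1)*(φ (n+1)+1) - (M+1)*(φ n+1) with hQ
    have hle : ∀ n : ℕ, (M+1)*(φ n+1) ≤ (M+1)*(φ (n+1)+1) := by
      intro n
      have : φ n + 1 ≤ φ (n+1) + 1 := by have := hφ (show n < n + 1 by omega); omega
      exact Nat.mul_le_mul_left _ this
    have hQM : ∀ n, M ≤ Q n := by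
      intro n
      have h1 : Q n + (M+1)*(φ n+1) = (M+1)*(φ (n+1)+1) := Nat.sub_add_cancel (hle n)
      have h2 : (M+1)*(φ n+1) + (M+1) ≤ (M+1)*(φ (n+1)+1) := by
        have : φ n + 1 + 1 ≤ φ (n+1) + 1 := by have := hφ (show n < n + 1 by omega); omega
        calc (M+1)*(φ n+1) + (M+1) = (M+1)*(φ n + 1 + 1) := by ring
        _ ≤ (M+1)*(φ (n+1)+1) := Nat.mul_le_mul_left _ this
      omega
    have hz' : Tendsto (fun n => lamPow ((M+1)*(φ n+1))) atTop (𝓝 z) := hz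
    have hshift : Tendsto (fun n => lamPow ((M+1)*(φ (n+1)+1))) atTop (𝓝 z) :=
      hz'.comp (tendsto_add_atTop_nat 1)
    have hQlim : Tendsto (fun n => lamPow (Q n)) atTop (𝓝 1) := by
      have hmul := hshift.mul (hz'.inv)
      rw [mul_inv_cancel] at hmul
      apply hmul.congr
      intro n
      symm
      rw [eq_mul_inv_iff_mul_eq, ← hadd,
        show Q n + (M+1)*(φ n+1) = (M+1)*(φ (n+1)+1) from Nat.sub_add_cancel (hle n)]
    have hev : ∀ᶠ n in atTop, dist (lamPow (Q n)) 1 < ε := by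
      have := Metric.tendsto_nhds.mp hQlim ε hε
      exact this
    obtain ⟨n, hn⟩ := hev.exists
    exact ⟨Q n, hQM n, hn⟩
  -- injectivity of the first projection on Ghat
  have hK2 : ∀ x ∈ Ghat, ∀ y ∈ Ghat, x.1 = y.1 → x = y := by
    intro x hx y hy hxy
    rw [hGhat, mem_closure_iff_seq_limit] at hx hy
    obtain ⟨xs, hxs, hxslim⟩ := hx
    obtain ⟨ys, hys, hyslim⟩ := hy
    choose a ha1 ha2 using hxs
    choose b hb1 hb2 using hys
    have hxf : Tendsto (fun n => lamPow (a n)) atTop (𝓝 x.1) := by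
      apply ((continuous_fst.tendsto x).comp hxslim).congr
      intro n
      rw [Function.comp_apply, ha2 n]
    have hxe : Tendsto (fun n => eC (a n)) atTop (𝓝 x.2) := by
      apply ((continuous_snd.tendsto x).comp hxslim).congr
      intro n
      rw [Function.comp_apply, ha2 n]
    have hyf : Tendsto (fun n => lamPow (b n)) atTop (𝓝 x.1) := by
      rw [hxy]
      apply ((continuous_fst.tendsto y).comp hyslim).congr
      intro n
      rw [Function.comp_apply, hb2 n]
    have hye : Tendsto (fun n => eC (b n)) atTop (𝓝 y.2) := by
      apply ((continuous_snd.tendsto y).comp hyslim).congr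
      intro n
      rw [Function.comp_apply, hb2 n]
    have hchoice : ∀ n : ℕ, ∃ q : ℕ, (a n + 1) ≤ q ∧ dist (lamPow q) 1 < 1/(n+1) :=
      fun n => hrec (a n + 1) (1/(n+1)) (by positivity)
    choose q hq1 hq2 using hchoice
    set p : ℕ → ℕ := fun n => q n - a n with hp
    have hp1 : ∀ n, 1 ≤ p n := fun n => by
      have := hq1 n; simp only [hp]; omega
    have hpq : ∀ n, p n + a n = q n := fun n => by
      have := hq1 n; simp only [hp]; omega
    have hqlim : Tendsto (fun n => lamPow (q n)) atTop (𝓝 1) := by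
      rw [Metric.tendsto_atTop]
      intro ε hε
      obtain ⟨N, hN⟩ := exists_nat_one_div_lt hε
      refine ⟨N, fun n hn => ?_⟩
      have h2 := hq2 n
      have h3 : (1:ℝ)/(n+1) ≤ 1/(N+1) := by
        apply one_div_le_one_div_of_le
        · positivity
        · exact_mod_cast by omega
      calc dist (lamPow (q n)) 1 < 1/(n+1) := h2
        _ ≤ 1/(N+1) := h3
        _ < ε := hN
    have hplim : Tendsto (fun n => lamPow (p n)) atTop (𝓝 (x.1)⁻¹) := by
      have hmul := hqlim.mul (hxf.inv)
      rw [one_mul] at hmul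
      apply hmul.congr
      intro n
      symm
      rw [eq_mul_inv_iff_mul_eq, ← hadd, hpq n]
    obtain ⟨w, _, ψ, hψ, hwlim⟩ := (isCompact_univ (X := Circle)).tendsto_subseq
      (x := fun n => eC (p n)) (fun n => Set.mem_univ _)
    have hψtop := hψ.tendsto_atTop
    have hxw : x.2 * w = 1 := by
      have hlim1 : Tendsto (fun n => lamPow (a (ψ n) + p (ψ n))) atTop (𝓝 1) := by
        have := (hxf.comp hψtop).mul (hplim.comp hψtop)
        rw [mul_inv_cancel] at this
        apply this.congr
        intro n
        rw [hadd]
        rfl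
      have hlim2 := hK1 (fun n => a (ψ n) + p (ψ n))
        (fun n => by have := hp1 (ψ n); show 1 ≤ a (ψ n) + p (ψ n); omega) hlim1
      have hlim3 : Tendsto (fun n => eC (a (ψ n) + p (ψ n))) atTop (𝓝 (x.2 * w)) := by
        have := (hxe.comp hψtop).mul hwlim
        apply this.congr
        intro n
        rw [hecadd]
        rfl
      exact tendsto_nhds_unique hlim3 hlim2
    have hyw : y.2 * w = 1 := by
      have hlim1 : Tendsto (fun n => lamPow (b (ψ n) + p (ψ n))) atTop (𝓝 1) := by
        have := (hyf.comp hψtop).mul (hplim.comp hψtop)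
        rw [mul_inv_cancel] at this
        apply this.congr
        intro n
        rw [hadd]
        rfl
      have hlim2 := hK1 (fun n => b (ψ n) + p (ψ n))
        (fun n => by have := hp1 (ψ n); show 1 ≤ b (ψ n) + p (ψ n); omega) hlim1
      have hlim3 : Tendsto (fun n => eC (b (ψ n) + p (ψ n))) atTop (𝓝 (y.2 * w)) := by
        have := (hye.comp hψtop).mul hwlim
        apply this.congr
        intro n
        rw [hecadd]
        rfl
      exact tendsto_nhds_unique hlim3 hlim2
    have hsnd : x.2 = y.2 := by
      have : x.2 * w = y.2 * w := by rw [hxw, hyw]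
      exact mul_right_cancel this
    exact Prod.ext hxy hsnd
  -- compactness of Ghat
  have hGhatcomp : IsCompact Ghat := isClosed_closure.isCompact
  -- the l-th power property on Ghat
  have hkb' : ∀ k : ℕ, (k : ℝ) * β = ∑ i, (s i : ℝ) * ((k : ℝ) * θ i / 2) := by
    intro k
    rw [hβ, div_eq_mul_inv, Finset.sum_mul, Finset.mul_sum]
    apply Finset.sum_congr rfl
    intros; ring
  have hP1 : ∀ x ∈ Ghat, x.2 ^ l = ∏ i, x.1 i ^ (s i) := by
    have hclosed : IsClosed {x : (Fin r → Circle) × Circle | x.2 ^ l = ∏ i, x.1 i ^ (s i)} := by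
      apply isClosed_eq
      · exact continuous_snd.pow l
      · apply continuous_finset_prod
        intro i _
        exact ((continuous_apply i).comp continuous_fst).zpow _
    intro x hx
    have hsub : gen ⊆ {x : (Fin r → Circle) × Circle | x.2 ^ l = ∏ i, x.1 i ^ (s i)} := by
      rintro _ ⟨k, hk, rfl⟩
      show eC k ^ l = ∏ i, lamPow k i ^ (s i)
      rw [heC]
      dsimp only
      rw [ee_pow]
      have hc1 : (l : ℝ) * ((k : ℝ) * β / l) = (k : ℝ) * β := by field_simp
      rw [hc1]
      have hc2 : ∀ i : Fin r, lamPow k i ^ (s i) = ee ((s i : ℝ) * ((k : ℝ) * θ i / 2)) := by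
        intro i
        rw [hlam, ee_zpow]
      rw [Finset.prod_congr rfl (fun i _ => hc2 i), ee_prod]
      congr 1
      exact hkb' k
    exact (IsClosed.closure_subset_iff hclosed).2 hsub hx
  -- first components of Ghat lie in Γ
  have hfstmem : ∀ x ∈ Ghat, Prod.fst x ∈ Γ := by
    intro x hx
    rw [hΓ]
    apply map_mem_closure continuous_fst hx
    rintro _ ⟨k, hk, rfl⟩
    exact ⟨k, hk, rfl⟩
  -- surjectivity of fst onto Γ
  have hsurj : ∀ g ∈ Γ, ∃ x ∈ Ghat, Prod.fst x = g := by
    intro g hg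
    have himg : IsCompact (Prod.fst '' Ghat) := hGhatcomp.image continuous_fst
    have hclosed2 : IsClosed (Prod.fst '' Ghat) := himg.isClosed
    have hsub2 : {g : Fin r → Circle |
        ∃ k : ℕ, 1 ≤ k ∧ g = fun i => (Circle.exp (π * θ i)) ^ k} ⊆ Prod.fst '' Ghat := by
      rintro _ ⟨k, hk, rfl⟩
      exact ⟨(lamPow k, eC k), subset_closure ⟨k, hk, rfl⟩, rfl⟩
    have hsub3 : Γ ⊆ Prod.fst '' Ghat := by
      rw [hΓ]
      exact closure_minimal hsub2 hclosed2
    obtain ⟨x, hx1, hx2⟩ := hsub3 hg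
    exact ⟨x, hx1, hx2⟩
  -- the homeomorphism
  haveI : CompactSpace Ghat := isCompact_iff_compactSpace.1 hGhatcomp
  set f : Ghat → {g // g ∈ Γ} := fun x => ⟨x.val.1, hfstmem x.val x.property⟩ with hf
  have hfbij : Function.Bijective f := by
    constructor
    · intro x y hxy'
      exact Subtype.ext (hK2 x.val x.property y.val y.property (congrArg Subtype.val hxy'))
    · intro g
      obtain ⟨x, hx1, hx2⟩ := hsurj g.val g.property
      exact ⟨⟨x, hx1⟩, Subtype.ext hx2⟩
  have hfcont : Continuous f :=
    Continuous.subtype_mk (continuous_fst.comp continuous_subtype_val) _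
  set E : Ghat ≃ {g // g ∈ Γ} := Equiv.ofBijective f hfbij with hE
  set F : Ghat ≃ₜ {g // g ∈ Γ} := Continuous.homeoOfEquivCompactToT2 (f := E) hfcont with hF
  set h : {g // g ∈ Γ} → Circle := fun g => (F.symm g).val.2 with hh
  have hhcont : Continuous h :=
    continuous_snd.comp (continuous_subtype_val.comp F.symm.continuous)
  have hhfst : ∀ g : {g // g ∈ Γ}, (F.symm g).val.1 = g.val := by
    intro g
    have h5 : F (F.symm g) = g := F.apply_symm_apply g
    exact congrArg Subtype.val h5
  have hhmem : ∀ g : {g // g ∈ Γ}, ((g.val, h g) : (Fin r → Circle) × Circle) ∈ Ghat := by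
    intro g
    have hm := (F.symm g).property
    have h6 : (F.symm g).val = (g.val, h g) := by
      apply Prod.ext
      · exact hhfst g
      · rfl
    rwa [h6] at hm
  -- endpoints
  set t0 : ↥(Set.Icc (0:ℝ) 1) := ⟨0, Set.left_mem_Icc.2 zero_le_one⟩ with ht0
  set t1 : ↥(Set.Icc (0:ℝ) 1) := ⟨1, Set.right_mem_Icc.2 zero_le_one⟩ with ht1
  -- evaluation of h at integral-avoiding points of the path
  have hendpoint : ∀ (t : ↥(Set.Icc (0:ℝ) 1)), (∀ i, s i ≠ 0 → ∀ m : ℤ, u i t ≠ m) →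
      h ⟨η t, hηΓ t⟩ = ee ((∑ i, (s i : ℝ) * Int.fract (u i t)) / l) := by
    intro t ht
    have hmemG := hhmem ⟨η t, hηΓ t⟩
    have hx : ((η t, h ⟨η t, hηΓ t⟩) : (Fin r → Circle) × Circle) ∈ closure gen := hmemG
    rw [mem_closure_iff_seq_limit] at hx
    obtain ⟨xs, hxs, hxlim⟩ := hx
    choose a ha1 ha2 using hxs
    have hxf : Tendsto (fun n => lamPow (a n)) atTop (𝓝 (η t)) := by
      apply ((continuous_fst.tendsto _).comp hxlim).congr
      intro n
      rw [Function.comp_apply, ha2 n]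
    have hxe : Tendsto (fun n => eC (a n)) atTop (𝓝 (h ⟨η t, hηΓ t⟩)) := by
      apply ((continuous_snd.tendsto _).comp hxlim).congr
      intro n
      rw [Function.comp_apply, ha2 n]
    have hfr : ∀ i, s i ≠ 0 →
        Tendsto (fun n => Int.fract ((a n : ℝ) * θ i / 2)) atTop (𝓝 (Int.fract (u i t))) := by
      intro i hi
      have hco : Tendsto (fun n => lamPow (a n) i) atTop (𝓝 (η t i)) :=
        (tendsto_pi_nhds.1 hxf) i
      have h3 : (fun n => lamPow (a n) i) = fun n => ee ((a n : ℝ) * θ i / 2) :=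
        funext fun n => hlam (a n) i
      rw [h3] at hco
      have h4 : η t i = ee (u i t) := by rw [hlift t i]; rfl
      rw [h4] at hco
      exact fract_tendsto (ht i hi) hco
    have hsum : Tendsto (fun n => (∑ i, (s i : ℝ) * Int.fract ((a n : ℝ) * θ i / 2)) / l)
        atTop (𝓝 ((∑ i, (s i : ℝ) * Int.fract (u i t)) / l)) := by
      apply Tendsto.div_const
      apply tendsto_finset_sum
      intro i _
      by_cases hi : s i = 0
      · simp only [hi, Int.cast_zero, zero_mul]
        exact tendsto_const_nhds
      · exact (hfr i hi).const_mul _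
    have hlim2 : Tendsto (fun n => eC (a n)) atTop
        (𝓝 (ee ((∑ i, (s i : ℝ) * Int.fract (u i t)) / l))) :=
      ((ee_cont.tendsto _).comp hsum).congr fun n => (hkβ (a n) (ha1 n)).symm
    exact tendsto_nhds_unique hxe hlim2
  -- the root-of-unity function along the path
  set V : ↥(Set.Icc (0:ℝ) 1) → ℝ := fun t => (∑ i, (s i : ℝ) * u i t) / l with hV
  set ζ : ↥(Set.Icc (0:ℝ) 1) → Circle := fun t => h ⟨η t, hηΓ t⟩ * (ee (V t))⁻¹ with hζ
  have hζcont : Continuous ζ := by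
    apply Continuous.mul
    · exact hhcont.comp (Continuous.subtype_mk hη _)
    · apply Continuous.inv
      apply ee_cont.comp
      apply Continuous.div_const
      apply continuous_finset_sum
      intro i _
      exact continuous_const.mul (hu i)
  have hζroot : ∀ t, (ζ t) ^ l = 1 := by
    intro t
    have hP := hP1 _ (hhmem ⟨η t, hηΓ t⟩)
    have h2 : (ee (V t)) ^ l = ∏ i, (η t i) ^ (s i) := by
      rw [ee_pow]
      have h7 : (l : ℝ) * V t = ∑ i, (s i : ℝ) * u i t := by
        rw [hV]; field_simp
      rw [h7, ← ee_prod]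
      apply Finset.prod_congr rfl
      intro i _
      rw [hlift t i, show Circle.exp (2 * π * u i t) = ee (u i t) from rfl, ee_zpow]
    rw [hζ]
    dsimp only
    rw [mul_pow, inv_pow, hP, h2, mul_inv_cancel]
  -- ζ is constant (finitely many values on a preconnected space)
  have hconst : ζ t1 = ζ t0 := by
    by_contra hne
    set D : ↥(Set.Icc (0:ℝ) 1) → ℝ := fun t => dist ((ζ t : ℂ)) ((ζ t0 : ℂ)) with hD
    have hDcont : Continuous D :=
      (continuous_subtype_val.comp hζcont).dist continuous_const
    have hRoots : Set.Finite {z : ℂ | z ^ l = 1} := by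
      have hsubr : {z : ℂ | z ^ l = 1} ⊆ ↑((Polynomial.nthRoots l (1 : ℂ)).toFinset) := by
        intro z hz
        rw [Finset.mem_coe, Multiset.mem_toFinset,
          Polynomial.mem_nthRoots (by omega : 0 < l)]
        exact hz
      exact Set.Finite.subset ((Polynomial.nthRoots l (1 : ℂ)).toFinset).finite_toSet hsubr
    have hDfin : Set.Finite ((fun z : ℂ => dist z ((ζ t0 : ℂ))) '' {z : ℂ | z ^ l = 1}) :=
      hRoots.image _
    have hmemD : ∀ t, D t ∈ (fun z : ℂ => dist z ((ζ t0 : ℂ))) '' {z : ℂ | z ^ l = 1} := by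
      intro t
      refine ⟨(ζ t : ℂ), ?_, rfl⟩
      show (ζ t : ℂ) ^ l = 1
      have h8 := hζroot t
      have h9 := congrArg (Subtype.val) h8
      push_cast at h9
      exact_mod_cast h9
    have hD1 : 0 < D t1 := by
      rw [hD]
      apply dist_pos.2
      intro hc
      exact hne (Subtype.ext hc)
    obtain ⟨y, hy⟩ := ((Set.Ioo_infinite hD1).diff hDfin).nonempty
    obtain ⟨hy1, hy2⟩ := hy
    have hymem : y ∈ Set.Icc (D t0) (D t1) := by
      have hD0 : D t0 = 0 := dist_self _
      rw [hD0]
      exact ⟨hy1.1.le, hy1.2.le⟩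
    obtain ⟨t, hty⟩ := intermediate_value_univ t0 t1 hDcont hymem
    exact hy2 (hty ▸ hmemD t)
  -- value of ζ at good endpoints
  have hζval : ∀ (t : ↥(Set.Icc (0:ℝ) 1)), (∀ i, s i ≠ 0 → ∀ m : ℤ, u i t ≠ m) →
      ζ t = ee ((-((∑ i, s i * ⌊u i t⌋ : ℤ) : ℝ)) / l) := by
    intro t ht
    rw [hζ]
    dsimp only
    rw [hendpoint t ht, ← ee_neg, ← ee_add]
    congr 1
    rw [hV]
    have h10 : (∑ i, (s i : ℝ) * Int.fract (u i t)) - (∑ i, (s i : ℝ) * u i t)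
        = -((∑ i, s i * ⌊u i t⌋ : ℤ) : ℝ) := by
      push_cast
      rw [← Finset.sum_sub_distrib, ← Finset.sum_neg_distrib]
      apply Finset.sum_congr rfl
      intro i _
      rw [Int.fract]
      ring
    dsimp only
    rw [← sub_eq_add_neg, div_sub_div_same, h10]
  have hval0 := hζval t0 h0
  have hval1 := hζval t1 h1
  rw [hval0, hval1] at hconst
  obtain ⟨m, hm⟩ := ee_eq_iff.1 hconst
  set B0 : ℤ := ∑ i, s i * ⌊u i t0⌋ with hB0
  set B1 : ℤ := ∑ i, s i * ⌊u i t1⌋ with hB1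
  have hml : (B0 : ℝ) - B1 = (m : ℝ) * l := by
    have h2 := congrArg (fun x : ℝ => x * l) hm
    rw [div_mul_cancel₀ _ hlR, add_mul, div_mul_cancel₀ _ hlR] at h2
    linarith
  have hml' : B0 - B1 = m * l := by exact_mod_cast hml
  have hgoal : ∑ i, s i * (⌊u i t1⌋ - ⌊u i t0⌋) = B1 - B0 := by
    rw [hB1, hB0, ← Finset.sum_sub_distrib]
    apply Finset.sum_congr rfl
    intros; ring
  rw [hgoal]
  exact ⟨-m, by linear_combination -hml'⟩
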